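/- Let n be even and d ≥ 0 an integer. Let x : [n] → {−1, 0, +1} be such that at most n/2 coordinates equal +1, at most n/2 coordinates equal −1, at least 6d + 1 coordinates equal 0, and |Σ_{h=1}^{j} x_h| ≤ d + unq(1,j)/2 for every 1 ≤ j ≤ n, where unq(1,j) denotes the number of indices h ≤ j with x_h = 0. Then there exists y : [n] → {−1, +1} with y_h = x_h whenever x_h ≠ 0, Σ_{h=1}^{n} y_h = 0, and |Σ_{h=1}^{j} y_h| > d for some 1 ≤ j ≤ n. -/

import Mathlib

open Finset

lemma sum_pm (s : Finset ℕ) (x : ℕ → ℤ) (hx : ∀ h ∈ s, x h = -1 ∨ x h = 0 ∨ x h = 1) :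
    ∑ h ∈ s, x h = ((s.filter fun h => x h = 1).card : ℤ) - ((s.filter fun h => x h = -1).card) := by
  classical
  induction s using Finset.induction_on with
  | empty => simp
  | @insert a s hnotmem ih =>
    rw [Finset.sum_insert hnotmem, ih (fun h hh => hx h (Finset.mem_insert_of_mem hh))]
    rcases hx a (Finset.mem_insert_self a s) with h | h | h <;>
      simp [Finset.filter_insert, h, Finset.card_insert_of_notMem, hnotmem,
        Finset.mem_filter] <;> push_cast <;> ring

lemma exists_count (p : ℕ → Prop) [DecidablePred p] (n k : ℕ) (hk : 1 ≤ k)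
    (h : k ≤ ((Finset.range n).filter p).card) :
    ∃ j, 1 ≤ j ∧ j ≤ n ∧ ((Finset.range j).filter p).card = k := by
  classical
  have hex : ∃ j, k ≤ ((Finset.range j).filter p).card := ⟨n, h⟩
  set j := Nat.find hex with hjdef
  have hj : k ≤ ((Finset.range j).filter p).card := Nat.find_spec hex
  have hjn : j ≤ n := Nat.find_le h
  have hj1 : 1 ≤ j := by
    rcases Nat.eq_zero_or_pos j with h0 | h0
    · exfalso; rw [h0] at hj; simp at hj; omega
    · exact h0
  have hstep : ((Finset.range j).filter p).card ≤ ((Finset.range (j-1)).filter p).card + 1 := by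
    have hje : j = (j-1) + 1 := by omega
    nth_rewrite 1 [hje]
    simp only [Finset.range_add_one, Finset.filter_insert]
    split <;> simp [Finset.card_insert_le]
  have hlt : ¬ (k ≤ ((Finset.range (j-1)).filter p).card) :=
    Nat.find_min hex (m := j - 1) (by omega)
  exact ⟨j, hj1, hjn, by omega⟩


lemma filter_range_inter (p : ℕ → Prop) [DecidablePred p] (j n : ℕ) (h : j ≤ n) :
    (Finset.range j).filter p = ((Finset.range n).filter p) ∩ Finset.range j := by
  ext a
  simp only [Finset.mem_filter, Finset.mem_inter, Finset.mem_range]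
  constructor
  · rintro ⟨h1, h2⟩; exact ⟨⟨lt_of_lt_of_le h1 h, h2⟩, h1⟩
  · rintro ⟨⟨_, h2⟩, h3⟩; exact ⟨h3, h2⟩

lemma pushUp (n : ℕ) (hn : Even n) (d : ℕ) (x : ℕ → ℤ)
    (hx : ∀ h < n, x h = -1 ∨ x h = 0 ∨ x h = 1)
    (hminus : ((Finset.range n).filter fun h => x h = -1).card ≤ n / 2)
    (j : ℕ) (hj1 : 1 ≤ j) (hjn : j ≤ n)
    (hk : ((Finset.range n).filter fun h => x h = 1).card
        + ((Finset.range j).filter fun h => x h = 0).card ≤ n / 2)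
    (hbig : (d : ℤ) < (∑ h ∈ Finset.range j, x h)
        + ((Finset.range j).filter fun h => x h = 0).card) :
    ∃ y : ℕ → ℤ, (∀ h < n, y h = -1 ∨ y h = 1) ∧
      (∀ h < n, x h ≠ 0 → y h = x h) ∧
      (∑ h ∈ Finset.range n, y h = 0) ∧
      ∃ j, 1 ≤ j ∧ j ≤ n ∧ (d : ℤ) < |∑ h ∈ Finset.range j, y h| := by
  classical
  set P := (Finset.range n).filter (fun h => x h = 1) with hP
  set M := (Finset.range n).filter (fun h => x h = -1) with hM
  set Z := (Finset.range n).filter (fun h => x h = 0) with hZ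
  set Zj := (Finset.range j).filter (fun h => x h = 0) with hZj
  -- cardinality partition
  have hpmz : P.card + M.card + Z.card = n := by
    have hdisj1 : Disjoint P M := by
      rw [Finset.disjoint_left]
      intro a haP haM
      rw [hP, Finset.mem_filter] at haP
      rw [hM, Finset.mem_filter] at haM
      omega
    have hdisj2 : Disjoint (P ∪ M) Z := by
      rw [Finset.disjoint_left]
      intro a ha haZ
      rw [Finset.mem_union, hP, hM, Finset.mem_filter, Finset.mem_filter] at ha
      rw [hZ, Finset.mem_filter] at haZ
      rcases ha with h | h <;> omega
    have hun : (P ∪ M) ∪ Z = Finset.range n := by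
      ext a
      simp only [Finset.mem_union, hP, hM, hZ, Finset.mem_filter, Finset.mem_range]
      constructor
      · rintro ((⟨h, _⟩ | ⟨h, _⟩) | ⟨h, _⟩) <;> exact h
      · intro ha
        rcases hx a ha with h | h | h
        · exact Or.inl (Or.inr ⟨ha, h⟩)
        · exact Or.inr ⟨ha, h⟩
        · exact Or.inl (Or.inl ⟨ha, h⟩)
    have := Finset.card_union_of_disjoint hdisj2
    rw [hun, Finset.card_union_of_disjoint hdisj1, Finset.card_range] at this
    omega
  have hhalf : n / 2 + n / 2 = n := by
    obtain ⟨m, hm⟩ := hn; omega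
  have hZjZ : Zj ⊆ Z := by
    rw [hZj, filter_range_inter _ j n hjn]
    exact Finset.inter_subset_left
  -- choose S
  have haZ : n / 2 - P.card ≤ Z.card := by omega
  obtain ⟨S, hS1, hS2, hS3⟩ := Finset.exists_subsuperset_card_eq hZjZ
    (by omega : Zj.card ≤ n / 2 - P.card) haZ
  refine ⟨fun h => if x h = 0 then (if h ∈ S then 1 else -1) else x h, ?_, ?_, ?_, ?_⟩
  · intro h hh
    by_cases h0 : x h = 0
    · by_cases hs : h ∈ S <;> simp [h0, hs]
    · rcases hx h hh with h1 | h1 | h1 <;> simp [h0, h1] <;> tauto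
  · intro h _ h0; simp [h0]
  · -- total sum is zero
    rw [← Finset.sum_filter_add_sum_filter_not (Finset.range n) (fun h => x h = 0)]
    have e1 : ∑ h ∈ (Finset.range n).filter (fun h => x h = 0),
        (if x h = 0 then (if h ∈ S then (1:ℤ) else -1) else x h)
        = (S.card : ℤ) - ((Z.card : ℤ) - S.card) := by
      rw [← hZ]
      rw [← Finset.sum_filter_add_sum_filter_not Z (fun h => h ∈ S)]
      have hZS : Z.filter (fun h => h ∈ S) = S := by
        ext a
        simp only [Finset.mem_filter]
        exact ⟨fun ⟨_, h⟩ => h, fun h => ⟨hS2 h, h⟩⟩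
      have h2 : ∀ a ∈ Z.filter (fun h => h ∈ S),
          (if x a = 0 then (if a ∈ S then (1:ℤ) else -1) else x a) = 1 := by
        intro a ha
        rw [Finset.mem_filter] at ha
        have := ha.1
        rw [hZ, Finset.mem_filter] at this
        simp [this.2, ha.2]
      have h3 : ∀ a ∈ Z.filter (fun h => ¬ (h ∈ S)),
          (if x a = 0 then (if a ∈ S then (1:ℤ) else -1) else x a) = -1 := by
        intro a ha
        rw [Finset.mem_filter] at ha
        have := ha.1
        rw [hZ, Finset.mem_filter] at this
        simp [this.2, ha.2]
      rw [Finset.sum_congr rfl h2, Finset.sum_congr rfl h3]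
      simp only [Finset.sum_const, nsmul_eq_mul, mul_one, mul_neg]
      rw [hZS]
      have : (Z.filter (fun h => ¬ (h ∈ S))).card = Z.card - S.card := by
        rw [Finset.filter_not, hZS, Finset.card_sdiff_of_subset hS2]
      rw [this]
      have hSZ : S.card ≤ Z.card := Finset.card_le_card hS2
      push_cast [Nat.cast_sub hSZ]
      ring
    have e2 : ∑ h ∈ (Finset.range n).filter (fun h => ¬ (x h = 0)),
        (if x h = 0 then (if h ∈ S then (1:ℤ) else -1) else x h)
        = (P.card : ℤ) - M.card := by
      have h2 : ∀ a ∈ (Finset.range n).filter (fun h => ¬ (x h = 0)),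
          (if x a = 0 then (if a ∈ S then (1:ℤ) else -1) else x a) = x a := by
        intro a ha
        rw [Finset.mem_filter] at ha
        simp [ha.2]
      rw [Finset.sum_congr rfl h2]
      have := sum_pm ((Finset.range n).filter (fun h => ¬ (x h = 0))) x
        (fun h hh => hx h (by rw [Finset.mem_filter, Finset.mem_range] at hh; exact hh.1))
      rw [this]
      congr 2
      · rw [hP, Finset.filter_filter]
        congr 1
        apply Finset.filter_congr
        intro a _
        constructor
        · rintro ⟨_, h⟩; exact h
        · intro h; exact ⟨by rw [h]; norm_num, h⟩
      · rw [hM, Finset.filter_filter]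
        congr 1
        apply Finset.filter_congr
        intro a _
        constructor
        · rintro ⟨_, h⟩; exact h
        · intro h; exact ⟨by rw [h]; norm_num, h⟩
    rw [e1, e2]
    have h1 : (P.card : ℤ) + M.card + Z.card = n := by exact_mod_cast hpmz
    have h2 : (S.card : ℤ) = (n/2 : ℕ) - P.card := by
      rw [hS3]; push_cast [Nat.cast_sub (by omega : P.card ≤ n/2)]; ring
    have h3 : ((n/2 : ℕ) : ℤ) + ((n/2 : ℕ) : ℤ) = n := by exact_mod_cast hhalf
    linarith
  · -- the prefix
    refine ⟨j, hj1, hjn, ?_⟩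
    have e : ∑ h ∈ Finset.range j,
        (if x h = 0 then (if h ∈ S then (1:ℤ) else -1) else x h)
        = (∑ h ∈ Finset.range j, x h) + Zj.card := by
      rw [← Finset.sum_filter_add_sum_filter_not (Finset.range j) (fun h => x h = 0), ← hZj]
      have h2 : ∀ a ∈ Zj, (if x a = 0 then (if a ∈ S then (1:ℤ) else -1) else x a) = 1 := by
        intro a ha
        have haS := hS1 ha
        rw [hZj, Finset.mem_filter] at ha
        simp [ha.2, haS]
      have h3 : ∀ a ∈ (Finset.range j).filter (fun h => ¬ (x h = 0)),
          (if x a = 0 then (if a ∈ S then (1:ℤ) else -1) else x a) = x a := by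
        intro a ha
        rw [Finset.mem_filter] at ha
        simp [ha.2]
      rw [Finset.sum_congr rfl h2, Finset.sum_congr rfl h3]
      have : ∑ h ∈ Finset.range j, x h
          = ∑ h ∈ Zj, x h + ∑ h ∈ (Finset.range j).filter (fun h => ¬ (x h = 0)), x h := by
        rw [hZj, Finset.sum_filter_add_sum_filter_not]
      rw [this]
      have hz0 : ∑ h ∈ Zj, x h = 0 := by
        apply Finset.sum_eq_zero
        intro a ha
        rw [hZj, Finset.mem_filter] at ha
        exact ha.2
      simp [hz0]
      ring
    rw [e]
    calc (d:ℤ) < (∑ h ∈ Finset.range j, x h) + Zj.card := hbig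
    _ ≤ |(∑ h ∈ Finset.range j, x h) + Zj.card| := le_abs_self _
lemma pushDown (n : ℕ) (hn : Even n) (d : ℕ) (x : ℕ → ℤ)
    (hx : ∀ h < n, x h = -1 ∨ x h = 0 ∨ x h = 1)
    (hplus : ((Finset.range n).filter fun h => x h = 1).card ≤ n / 2)
    (j : ℕ) (hj1 : 1 ≤ j) (hjn : j ≤ n)
    (hk : ((Finset.range n).filter fun h => x h = -1).card
        + ((Finset.range j).filter fun h => x h = 0).card ≤ n / 2)
    (hbig : (d : ℤ) < -(∑ h ∈ Finset.range j, x h)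
        + ((Finset.range j).filter fun h => x h = 0).card) :
    ∃ y : ℕ → ℤ, (∀ h < n, y h = -1 ∨ y h = 1) ∧
      (∀ h < n, x h ≠ 0 → y h = x h) ∧
      (∑ h ∈ Finset.range n, y h = 0) ∧
      ∃ j, 1 ≤ j ∧ j ≤ n ∧ (d : ℤ) < |∑ h ∈ Finset.range j, y h| := by
  classical
  have e1 : ∀ s : Finset ℕ, (s.filter fun h => -x h = 1) = s.filter fun h => x h = -1 := by
    intro s
    apply Finset.filter_congr
    intro a _
    constructor <;> intro h <;> linarith
  have e2 : ∀ s : Finset ℕ, (s.filter fun h => -x h = -1) = s.filter fun h => x h = 1 := by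
    intro s
    apply Finset.filter_congr
    intro a _
    constructor <;> intro h <;> linarith
  have e0 : ∀ s : Finset ℕ, (s.filter fun h => -x h = 0) = s.filter fun h => x h = 0 := by
    intro s
    apply Finset.filter_congr
    intro a _
    constructor <;> intro h <;> linarith
  obtain ⟨y', hy1, hy2, hy3, j', hj'1, hj'2, hj'3⟩ :=
    pushUp n hn d (fun h => -x h)
      (by intro h hh; rcases hx h hh with h1 | h1 | h1 <;> simp [h1])
      (by rw [e2]; exact hplus)
      j hj1 hjn
      (by rw [e1, e0]; exact hk)
      (by rw [e0]; rw [show (∑ h ∈ Finset.range j, -x h) = -∑ h ∈ Finset.range j, x h from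
            Finset.sum_neg_distrib _]; exact hbig)
  refine ⟨fun h => -y' h, ?_, ?_, ?_, j', hj'1, hj'2, ?_⟩
  · intro h hh
    rcases hy1 h hh with h1 | h1 <;> simp [h1]
  · intro h hh h0
    have := hy2 h hh (by simpa using h0)
    simp at this ⊢
    linarith
  · rw [Finset.sum_neg_distrib, hy3, neg_zero]
  · rw [Finset.sum_neg_distrib, abs_neg]
    exact hj'3

/-- Claim (ii'): let `n` be even, `d ≥ 0`, and `x : [n] → {-1,0,+1}` (positions
`0, …, n-1`) with at most `n/2` coordinates `+1`, at most `n/2` coordinates `-1`,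
at least `6d+1` unqueried (zero) coordinates, and
`|disc(1,j)| ≤ d + unq(1,j)/2` (written `2·|disc| ≤ 2d + unq`) for every prefix.
Then `x` has a balanced `±1`-completion with some prefix discrepancy exceeding `d`. -/
theorem stmt_14 (n : ℕ) (hn : Even n) (d : ℕ) (x : ℕ → ℤ)
    (hx : ∀ h < n, x h = -1 ∨ x h = 0 ∨ x h = 1)
    (hplus : ((Finset.range n).filter fun h => x h = 1).card ≤ n / 2)
    (hminus : ((Finset.range n).filter fun h => x h = -1).card ≤ n / 2)
    (hunq : 6 * d + 1 ≤ ((Finset.range n).filter fun h => x h = 0).card)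
    (hdisc : ∀ j, 1 ≤ j → j ≤ n →
      2 * |∑ h ∈ Finset.range j, x h| ≤
        2 * (d : ℤ) + ((Finset.range j).filter fun h => x h = 0).card) :
    ∃ y : ℕ → ℤ, (∀ h < n, y h = -1 ∨ y h = 1) ∧
      (∀ h < n, x h ≠ 0 → y h = x h) ∧
      (∑ h ∈ Finset.range n, y h = 0) ∧
      ∃ j, 1 ≤ j ∧ j ≤ n ∧ (d : ℤ) < |∑ h ∈ Finset.range j, y h| := by
  classical
  set P := (Finset.range n).filter (fun h => x h = 1) with hP
  set M := (Finset.range n).filter (fun h => x h = -1) with hM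
  set Z := (Finset.range n).filter (fun h => x h = 0) with hZ
  have hpmz : P.card + M.card + Z.card = n := by
    have hdisj1 : Disjoint P M := by
      rw [Finset.disjoint_left]
      intro a haP haM
      rw [hP, Finset.mem_filter] at haP
      rw [hM, Finset.mem_filter] at haM
      omega
    have hdisj2 : Disjoint (P ∪ M) Z := by
      rw [Finset.disjoint_left]
      intro a ha haZ
      rw [Finset.mem_union, hP, hM, Finset.mem_filter, Finset.mem_filter] at ha
      rw [hZ, Finset.mem_filter] at haZ
      rcases ha with h | h <;> omega
    have hun : (P ∪ M) ∪ Z = Finset.range n := by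
      ext a
      simp only [Finset.mem_union, hP, hM, hZ, Finset.mem_filter, Finset.mem_range]
      constructor
      · rintro ((⟨h, _⟩ | ⟨h, _⟩) | ⟨h, _⟩) <;> exact h
      · intro ha
        rcases hx a ha with h | h | h
        · exact Or.inl (Or.inr ⟨ha, h⟩)
        · exact Or.inr ⟨ha, h⟩
        · exact Or.inl (Or.inl ⟨ha, h⟩)
    have := Finset.card_union_of_disjoint hdisj2
    rw [hun, Finset.card_union_of_disjoint hdisj1, Finset.card_range] at this
    omega
  have hhalf : n / 2 + n / 2 = n := by
    obtain ⟨m, hm⟩ := hn; omega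
  by_cases hca : P.card + (4 * d + 1) ≤ n / 2
  · -- many +1's available: push up with k = 4d+1
    obtain ⟨j, hj1, hjn, hcj⟩ := exists_count (fun h => x h = 0) n (4 * d + 1)
      (by omega) (by rw [← hZ]; omega)
    apply pushUp n hn d x hx hminus j hj1 hjn (by rw [hcj]; exact hca)
    have hd := hdisc j hj1 hjn
    rw [hcj] at hd
    have hna := neg_abs_le (∑ h ∈ Finset.range j, x h)
    push_cast at hd ⊢
    linarith
  · by_cases hcb : M.card + (4 * d + 1) ≤ n / 2
    · -- many -1's available: push down with k = 4d+1
      obtain ⟨j, hj1, hjn, hcj⟩ := exists_count (fun h => x h = 0) n (4 * d + 1)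
        (by omega) (by rw [← hZ]; omega)
      apply pushDown n hn d x hx hplus j hj1 hjn (by rw [hcj]; exact hcb)
      have hd := hdisc j hj1 hjn
      rw [hcj] at hd
      have hna := le_abs_self (∑ h ∈ Finset.range j, x h)
      push_cast at hd ⊢
      linarith
    · -- both sides have at least d+1 room
      have hca' : P.card + (d + 1) ≤ n / 2 := by omega
      have hcb' : M.card + (d + 1) ≤ n / 2 := by omega
      obtain ⟨j, hj1, hjn, hcj⟩ := exists_count (fun h => x h = 0) n (d + 1)
        (by omega) (by rw [← hZ]; omega)
      by_cases hs : 0 ≤ ∑ h ∈ Finset.range j, x h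
      · apply pushUp n hn d x hx hminus j hj1 hjn (by rw [hcj]; exact hca')
        rw [hcj]
        push_cast
        linarith
      · apply pushDown n hn d x hx hplus j hj1 hjn (by rw [hcj]; exact hcb')
        rw [hcj]
        push_cast
        linarith
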